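/- Let (xₖ)ₖ∈ℕ be a discrete-time stochastic process adapted to a filtration (Fₖ) on a probability space (Ω, F, P), taking values in a measurable space X. Let Xs ⊆ X be measurable, B : X → ℝ a nonnegative measurable function with B(x) ≥ 1 for all x ∉ Xs, and suppose there are constants γ, c ≥ 0 such that B(x₀) ≤ γ almost surely and E[B(x_{k+1}) | Fₖ] ≤ B(xₖ) + c almost surely on the event {xⱼ ∈ Xs for all j ≤ k}. Then for any T ∈ ℕ, P{xₖ ∈ Xs for all k ∈ {0,…,T}} ≥ 1 - (γ + c·T). -/

import Mathlib

open MeasureTheory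

open Classical in
/-- The process `B (x k)` stopped at the first exit from `Xs`. -/
noncomputable def stoppedB {Ω X : Type*} (x : ℕ → Ω → X) (Xs : Set X) (B : X → ℝ) :
    ℕ → Ω → ℝ
  | 0 => fun ω => B (x 0 ω)
  | (k+1) => fun ω =>
      if ∀ j ≤ k, x j ω ∈ Xs then B (x (k+1) ω) else stoppedB x Xs B k ω

open Classical in
lemma stoppedB_succ {Ω X : Type*} (x : ℕ → Ω → X) (Xs : Set X) (B : X → ℝ) (k : ℕ) (ω : Ω) :
    stoppedB x Xs B (k+1) ω
      = if ∀ j ≤ k, x j ω ∈ Xs then B (x (k+1) ω) else stoppedB x Xs B k ω := rfl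

theorem stmt_4 {Ω : Type*} {m0 : MeasurableSpace Ω} (P : Measure Ω) [IsProbabilityMeasure P]
    {X : Type*} [MeasurableSpace X]
    (ℱ : Filtration ℕ m0)
    (x : ℕ → Ω → X) (hx_adapted : ∀ k, Measurable[ℱ k] (x k))
    (Xs : Set X) (hXs : MeasurableSet Xs)
    (B : X → ℝ) (hB_meas : Measurable B) (hB_nonneg : ∀ y, 0 ≤ B y)
    (hB_unsafe : ∀ y ∉ Xs, 1 ≤ B y)
    (γ c : ℝ) (hγ : 0 ≤ γ) (hc : 0 ≤ c)
    (hB_init : ∀ᵐ ω ∂P, B (x 0 ω) ≤ γ)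
    (hB_int : ∀ k, Integrable (fun ω => B (x k ω)) P)
    (hmart : ∀ k, ∀ᵐ ω ∂P,
      (∀ j ≤ k, x j ω ∈ Xs) →
        (P[fun ω' => B (x (k + 1) ω') | ℱ k]) ω ≤ B (x k ω) + c)
    (T : ℕ) :
    P {ω | ∀ k ≤ T, x k ω ∈ Xs} ≥ ENNReal.ofReal (1 - (γ + c * T)) := by
  classical
  set Y : ℕ → Ω → ℝ := stoppedB x Xs B with hY
  set A : ℕ → Set Ω := fun k => {ω | ∀ j ≤ k, x j ω ∈ Xs} with hAdef
  -- measurability of A k w.r.t. ℱ k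
  have hA_F : ∀ k, MeasurableSet[ℱ k] (A k) := by
    intro k
    have : A k = ⋂ j ∈ Set.Iic k, x j ⁻¹' Xs := by
      ext ω; simp [hAdef, Set.mem_iInter]
    rw [this]
    exact MeasurableSet.biInter (Set.to_countable _)
      (fun j hj => ((hx_adapted j).mono (ℱ.mono hj) le_rfl) hXs)
  have hA : ∀ k, MeasurableSet (A k) := fun k => ℱ.le k _ (hA_F k)
  have hxm : ∀ k, Measurable (x k) := fun k => (hx_adapted k).mono (ℱ.le k) le_rfl
  -- decomposition of Y (k+1)
  have hYsplit : ∀ k, Y (k+1) = (A k).indicator (fun ω => B (x (k+1) ω))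
      + (A k)ᶜ.indicator (Y k) := by
    intro k
    funext ω
    by_cases h : ω ∈ A k
    · have h' : ∀ j ≤ k, x j ω ∈ Xs := h
      simp only [hY, stoppedB_succ, if_pos h', Pi.add_apply, Set.indicator_of_mem h,
        Set.indicator_of_notMem (fun hωc : ω ∈ (A k)ᶜ => hωc h), add_zero]
    · have h' : ¬ ∀ j ≤ k, x j ω ∈ Xs := h
      simp only [hY, stoppedB_succ, if_neg h', Pi.add_apply, Set.indicator_of_notMem h,
        Set.indicator_of_mem (Set.mem_compl h), zero_add]
  -- integrability
  have hYint : ∀ k, Integrable (Y k) P := by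
    intro k
    induction k with
    | zero => exact hB_int 0
    | succ k ih =>
      rw [hYsplit k]
      exact ((hB_int (k+1)).indicator (hA k)).add (ih.indicator (hA k).compl)
  -- nonnegativity
  have hYnonneg : ∀ k ω, 0 ≤ Y k ω := by
    intro k
    induction k with
    | zero => intro ω; exact hB_nonneg _
    | succ k ih =>
      intro ω
      by_cases h : ∀ j ≤ k, x j ω ∈ Xs
      · rw [hY, stoppedB_succ, if_pos h]; exact hB_nonneg _
      · rw [hY, stoppedB_succ, if_neg h]; exact ih ω
  -- on A k, Y k = B (x k)
  have hYsafe : ∀ k ω, ω ∈ A k → Y k ω = B (x k ω) := by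
    intro k ω hω
    cases k with
    | zero => rfl
    | succ k =>
      have h : ∀ j ≤ k, x j ω ∈ Xs := fun j hj => hω j (hj.trans (Nat.le_succ k))
      rw [hY, stoppedB_succ, if_pos h]
  -- after exit, Y stays ≥ 1
  have hexit : ∀ k ω, ¬ (∀ j ≤ k, x j ω ∈ Xs) → 1 ≤ Y k ω := by
    intro k
    induction k with
    | zero =>
      intro ω h
      have : x 0 ω ∉ Xs := fun hs => h (fun j hj => by
        have : j = 0 := Nat.le_zero.mp hj
        rwa [this])
      exact hB_unsafe _ this
    | succ k ih =>
      intro ω h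
      by_cases hk : ∀ j ≤ k, x j ω ∈ Xs
      · have hx1 : x (k+1) ω ∉ Xs := by
          intro hs
          apply h
          intro j hj
          rcases Nat.lt_or_ge j (k+1) with hj' | hj'
          · exact hk j (Nat.lt_succ_iff.mp hj')
          · have : j = k + 1 := le_antisymm hj hj'
            rwa [this]
        have : Y (k+1) ω = B (x (k+1) ω) := by rw [hY, stoppedB_succ, if_pos hk]
        rw [this]
        exact hB_unsafe _ hx1
      · have : Y (k+1) ω = Y k ω := by simp [hY, stoppedB, hk]
        rw [this]
        exact ih ω hk
  -- key supermartingale-type step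
  have hstep : ∀ k, ∫ ω, Y (k+1) ω ∂P ≤ ∫ ω, Y k ω ∂P + c := by
    intro k
    have hsplit : ∫ ω, Y (k+1) ω ∂P
        = ∫ ω in A k, B (x (k+1) ω) ∂P + ∫ ω in (A k)ᶜ, Y k ω ∂P := by
      rw [hYsplit k]
      simp only [Pi.add_apply]
      rw [integral_add ((hB_int (k+1)).indicator (hA k)) ((hYint k).indicator (hA k).compl),
        integral_indicator (hA k), integral_indicator (hA k).compl]
    -- set integral of condexp
    have hcond : ∫ ω in A k, B (x (k+1) ω) ∂P
        = ∫ ω in A k, (P[fun ω' => B (x (k + 1) ω') | ℱ k]) ω ∂P :=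
      (setIntegral_condExp (ℱ.le k) (hB_int (k+1)) (hA_F k)).symm
    have hae : ∀ᵐ ω ∂(P.restrict (A k)),
        (P[fun ω' => B (x (k + 1) ω') | ℱ k]) ω ≤ Y k ω + c := by
      rw [ae_restrict_iff' (hA k)]
      filter_upwards [hmart k] with ω hω hmem
      rw [hYsafe k ω hmem]
      exact hω hmem
    have hmono : ∫ ω in A k, (P[fun ω' => B (x (k + 1) ω') | ℱ k]) ω ∂P
        ≤ ∫ ω in A k, (Y k ω + c) ∂P :=
      setIntegral_mono_ae_restrict integrable_condExp.integrableOn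
        ((hYint k).add (integrable_const c)).integrableOn hae
    have hconst : ∫ ω in A k, (Y k ω + c) ∂P
        = ∫ ω in A k, Y k ω ∂P + c * (P (A k)).toReal := by
      rw [integral_add (hYint k).integrableOn (integrable_const c).integrableOn,
        setIntegral_const, smul_eq_mul, mul_comm]; rfl
    have hPA : (P (A k)).toReal ≤ 1 := by
      have := prob_le_one (μ := P) (s := A k)
      simpa using ENNReal.toReal_mono (by simp) this
    have haddcompl : ∫ ω in A k, Y k ω ∂P + ∫ ω in (A k)ᶜ, Y k ω ∂P = ∫ ω, Y k ω ∂P :=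
      integral_add_compl (hA k) (hYint k)
    have hcP : c * (P (A k)).toReal ≤ c := by
      calc c * (P (A k)).toReal ≤ c * 1 := by
            exact mul_le_mul_of_nonneg_left hPA hc
        _ = c := mul_one c
    calc ∫ ω, Y (k+1) ω ∂P
        = ∫ ω in A k, B (x (k+1) ω) ∂P + ∫ ω in (A k)ᶜ, Y k ω ∂P := hsplit
      _ ≤ ∫ ω in A k, Y k ω ∂P + c * (P (A k)).toReal + ∫ ω in (A k)ᶜ, Y k ω ∂P := by
          rw [hcond] at *
          have := hmono.trans_eq hconst
          linarith
      _ = ∫ ω, Y k ω ∂P + c * (P (A k)).toReal := by rw [← haddcompl]; ring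
      _ ≤ ∫ ω, Y k ω ∂P + c := by linarith
  -- bound on E[Y k]
  have hEY : ∀ k : ℕ, ∫ ω, Y k ω ∂P ≤ γ + c * k := by
    intro k
    induction k with
    | zero =>
      have h0 : ∫ ω, Y 0 ω ∂P ≤ ∫ _ω, γ ∂P :=
        integral_mono_ae (hYint 0) (integrable_const γ) hB_init
      simpa using h0
    | succ k ih =>
      have h2 : ∫ ω, Y (k+1) ω ∂P ≤ (γ + c * k) + c := le_trans (hstep k) (by linarith)
      push_cast
      linarith
  -- probability of failure
  have hFmeas : MeasurableSet ((A T)ᶜ) := (hA T).compl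
  have hPF : (P ((A T)ᶜ)).toReal ≤ γ + c * T := by
    have h1 : (P ((A T)ᶜ)).toReal = ∫ _ω in (A T)ᶜ, (1:ℝ) ∂P := by
      rw [setIntegral_const, smul_eq_mul, mul_one]; rfl
    have h2 : ∫ _ω in (A T)ᶜ, (1:ℝ) ∂P ≤ ∫ ω in (A T)ᶜ, Y T ω ∂P := by
      refine setIntegral_mono_on (integrable_const 1).integrableOn
        (hYint T).integrableOn hFmeas (fun ω hω => ?_)
      exact hexit T ω hω
    have h3 : ∫ ω in (A T)ᶜ, Y T ω ∂P ≤ ∫ ω, Y T ω ∂P :=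
      setIntegral_le_integral (hYint T) (Filter.Eventually.of_forall (fun ω => hYnonneg T ω))
    calc (P ((A T)ᶜ)).toReal = ∫ _ω in (A T)ᶜ, (1:ℝ) ∂P := h1
      _ ≤ ∫ ω in (A T)ᶜ, Y T ω ∂P := h2
      _ ≤ ∫ ω, Y T ω ∂P := h3
      _ ≤ γ + c * T := hEY T
  have hPF' : P ((A T)ᶜ) ≤ ENNReal.ofReal (γ + c * T) := by
    rw [← ENNReal.ofReal_toReal (measure_ne_top P ((A T)ᶜ))]
    exact ENNReal.ofReal_le_ofReal hPF
  -- conclude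
  show ENNReal.ofReal (1 - (γ + c * T)) ≤ P (A T)
  by_cases h1 : 1 - (γ + c * ↑T) ≤ 0
  · rw [ENNReal.ofReal_eq_zero.mpr h1]
    exact zero_le
  · push_neg at h1
    have hsum : ENNReal.ofReal (1 - (γ + c * T)) + P ((A T)ᶜ) ≤ 1 := by
      calc ENNReal.ofReal (1 - (γ + c * T)) + P ((A T)ᶜ)
          ≤ ENNReal.ofReal (1 - (γ + c * T)) + ENNReal.ofReal (γ + c * T) :=
            add_le_add_right hPF' _
        _ = ENNReal.ofReal 1 := by
            rw [← ENNReal.ofReal_add (le_of_lt (by linarith))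
              (by positivity)]
            norm_num
        _ = 1 := ENNReal.ofReal_one
    have htotal : P (A T) + P ((A T)ᶜ) = 1 := by
      rw [measure_add_measure_compl (hA T)]
      simp
    rw [← htotal] at hsum
    exact (ENNReal.add_le_add_iff_right (measure_ne_top P _)).mp hsum
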